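/- Let 1 ≤ p < q < ∞. For any normed space (X, ‖·‖_X), measure space (Ω, μ), and measurable functions f, g : Ω → X with ‖f‖_{L_p(μ;X)} ≤ 1 and ‖g‖_{L_p(μ;X)} ≤ 1, the vector-valued Mazur map M_{p,q}f(ω) = f(ω)/‖f(ω)‖_X^{1−p/q} (set to 0 where f(ω)=0) satisfies ‖M_{p,q}f − M_{p,q}g‖_{L_q(μ;X)} ≤ C(p,q) ‖f − g‖_{L_p(μ;X)}^{p/q} for some constant C(p,q) depending only on p and q. -/

import Mathlib

open MeasureTheory ENNReal

private lemma rpow_sub_one_mul {x α : ℝ} (hx : 0 ≤ x) (hα : α ≠ 0) :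
    x ^ (α - 1) * x = x ^ α := by
  rcases eq_or_lt_of_le hx with h | h
  · rw [← h, mul_zero, Real.zero_rpow hα]
  · have h2 := Real.rpow_add h (α - 1) 1
    rw [sub_add_cancel, Real.rpow_one] at h2
    linarith

private lemma norm_phi {X : Type*} [NormedAddCommGroup X] [NormedSpace ℝ X]
    {α : ℝ} (hα : α ≠ 0) (a : X) : ‖(‖a‖ ^ (α - 1)) • a‖ = ‖a‖ ^ α := by
  rw [norm_smul, Real.norm_eq_abs, abs_of_nonneg (Real.rpow_nonneg (norm_nonneg a) _),
    rpow_sub_one_mul (norm_nonneg a) hα]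

private lemma mazur_ptwise_aux {X : Type*} [NormedAddCommGroup X] [NormedSpace ℝ X]
    {α : ℝ} (h0 : 0 < α) (h1 : α < 1) (a b : X) (hba : ‖b‖ ≤ ‖a‖) :
    ‖(‖a‖ ^ (α - 1)) • a - (‖b‖ ^ (α - 1)) • b‖ ≤ 2 * ‖a - b‖ ^ α := by
  have hα : α ≠ 0 := ne_of_gt h0
  by_cases hab : a = b
  · simp [hab, mul_nonneg, Real.rpow_nonneg]
  have hd : 0 < ‖a - b‖ := by rwa [norm_pos_iff, sub_ne_zero]
  rcases eq_or_ne a 0 with ha0 | ha0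
  · exfalso; apply hab
    have : ‖b‖ ≤ 0 := by simpa [ha0] using hba
    have hb0 : b = 0 := by rwa [← norm_le_zero_iff]
    rw [ha0, hb0]
  have ha : 0 < ‖a‖ := norm_pos_iff.mpr ha0
  by_cases hc : ‖a‖ ≤ ‖a - b‖
  · calc ‖(‖a‖ ^ (α - 1)) • a - (‖b‖ ^ (α - 1)) • b‖
        ≤ ‖(‖a‖ ^ (α - 1)) • a‖ + ‖(‖b‖ ^ (α - 1)) • b‖ := norm_sub_le _ _
      _ = ‖a‖ ^ α + ‖b‖ ^ α := by rw [norm_phi hα, norm_phi hα]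
      _ ≤ ‖a - b‖ ^ α + ‖a - b‖ ^ α := add_le_add
          (Real.rpow_le_rpow (norm_nonneg a) hc h0.le)
          (Real.rpow_le_rpow (norm_nonneg b) (hba.trans hc) h0.le)
      _ = 2 * ‖a - b‖ ^ α := by ring
  push_neg at hc
  have hb0 : b ≠ 0 := by
    rintro rfl
    simp only [sub_zero] at hc
    exact lt_irrefl _ hc
  have hb : 0 < ‖b‖ := norm_pos_iff.mpr hb0
  have hdecomp : (‖a‖ ^ (α - 1)) • a - (‖b‖ ^ (α - 1)) • b
      = (‖a‖ ^ (α - 1)) • (a - b) + (‖a‖ ^ (α - 1) - ‖b‖ ^ (α - 1)) • b := by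
    rw [smul_sub, sub_smul]; abel
  have hmono : ‖a‖ ^ (α - 1) ≤ ‖b‖ ^ (α - 1) :=
    Real.rpow_le_rpow_of_nonpos hb hba (by linarith)
  have term1 : ‖a‖ ^ (α - 1) * ‖a - b‖ ≤ ‖a - b‖ ^ α := by
    have : ‖a‖ ^ (α - 1) ≤ ‖a - b‖ ^ (α - 1) :=
      Real.rpow_le_rpow_of_nonpos hd hc.le (by linarith)
    calc ‖a‖ ^ (α - 1) * ‖a - b‖ ≤ ‖a - b‖ ^ (α - 1) * ‖a - b‖ := by gcongr
      _ = ‖a - b‖ ^ α := rpow_sub_one_mul hd.le hα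
  have term2 : (‖b‖ ^ (α - 1) - ‖a‖ ^ (α - 1)) * ‖b‖ ≤ ‖a - b‖ ^ α := by
    have key : (‖b‖ ^ (α - 1) - ‖a‖ ^ (α - 1)) * ‖b‖ ≤ (‖a‖ - ‖b‖) ^ α := by
      rcases eq_or_lt_of_le hba with he | he
      · rw [he, sub_self, sub_self, zero_mul]
        exact Real.rpow_nonneg le_rfl α
      · have hpos : 0 < ‖a‖ - ‖b‖ := by linarith
        have e1 : (‖b‖ ^ (α - 1) - ‖a‖ ^ (α - 1)) * ‖b‖
            = ‖b‖ ^ α - ‖a‖ ^ (α - 1) * ‖b‖ := by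
          rw [sub_mul, rpow_sub_one_mul hb.le hα]
        have e2 : ‖b‖ ^ α ≤ ‖a‖ ^ α := Real.rpow_le_rpow hb.le hba h0.le
        have e3 : ‖a‖ ^ α - ‖a‖ ^ (α - 1) * ‖b‖ = ‖a‖ ^ (α - 1) * (‖a‖ - ‖b‖) := by
          rw [mul_sub, rpow_sub_one_mul ha.le hα]
        have e4 : ‖a‖ ^ (α - 1) * (‖a‖ - ‖b‖) ≤ (‖a‖ - ‖b‖) ^ α := by
          have : ‖a‖ ^ (α - 1) ≤ (‖a‖ - ‖b‖) ^ (α - 1) :=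
            Real.rpow_le_rpow_of_nonpos hpos (by linarith) (by linarith)
          calc ‖a‖ ^ (α - 1) * (‖a‖ - ‖b‖)
              ≤ (‖a‖ - ‖b‖) ^ (α - 1) * (‖a‖ - ‖b‖) := by gcongr
            _ = (‖a‖ - ‖b‖) ^ α := rpow_sub_one_mul hpos.le hα
        linarith [e1, e2, e3, e4]
    refine key.trans (Real.rpow_le_rpow (by linarith) ?_ h0.le)
    have := norm_sub_norm_le a b; linarith
  calc ‖(‖a‖ ^ (α - 1)) • a - (‖b‖ ^ (α - 1)) • b‖
      ≤ ‖(‖a‖ ^ (α - 1)) • (a - b)‖ + ‖(‖a‖ ^ (α - 1) - ‖b‖ ^ (α - 1)) • b‖ := by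
        rw [hdecomp]; exact norm_add_le _ _
    _ = ‖a‖ ^ (α - 1) * ‖a - b‖ + (‖b‖ ^ (α - 1) - ‖a‖ ^ (α - 1)) * ‖b‖ := by
        rw [norm_smul, norm_smul, Real.norm_eq_abs, Real.norm_eq_abs,
          abs_of_nonneg (Real.rpow_nonneg (norm_nonneg a) _),
          abs_of_nonpos (by linarith), neg_sub]
    _ ≤ ‖a - b‖ ^ α + ‖a - b‖ ^ α := add_le_add term1 term2
    _ = 2 * ‖a - b‖ ^ α := by ring

private lemma mazur_ptwise {X : Type*} [NormedAddCommGroup X] [NormedSpace ℝ X]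
    {α : ℝ} (h0 : 0 < α) (h1 : α < 1) (a b : X) :
    ‖(‖a‖ ^ (α - 1)) • a - (‖b‖ ^ (α - 1)) • b‖ ≤ 2 * ‖a - b‖ ^ α := by
  rcases le_total ‖b‖ ‖a‖ with h | h
  · exact mazur_ptwise_aux h0 h1 a b h
  · rw [norm_sub_rev, norm_sub_rev a b]
    exact mazur_ptwise_aux h0 h1 b a h

theorem mazur_map_holder (p q : ℝ) (hp : 1 ≤ p) (hpq : p < q) :
    ∃ C : ℝ, 0 < C ∧
      ∀ (X : Type*) [NormedAddCommGroup X] [NormedSpace ℝ X]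
        (Ω : Type*) [MeasurableSpace Ω] (μ : Measure Ω) (f g : Ω → X),
        AEStronglyMeasurable f μ → AEStronglyMeasurable g μ →
        (∫⁻ ω, (‖f ω‖₊ : ℝ≥0∞) ^ p ∂μ) ≤ 1 →
        (∫⁻ ω, (‖g ω‖₊ : ℝ≥0∞) ^ p ∂μ) ≤ 1 →
        (∫⁻ ω, (‖(‖f ω‖ ^ (p / q - 1)) • f ω -
            (‖g ω‖ ^ (p / q - 1)) • g ω‖₊ : ℝ≥0∞) ^ q ∂μ) ^ (1 / q) ≤
          ENNReal.ofReal C *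
            (∫⁻ ω, (‖f ω - g ω‖₊ : ℝ≥0∞) ^ p ∂μ) ^ (1 / q) := by
  have hq0 : (0:ℝ) < q := by linarith
  have hq0' : q ≠ 0 := ne_of_gt hq0
  have hα0 : (0:ℝ) < p / q := div_pos (by linarith) hq0
  have hα1 : p / q < 1 := (div_lt_one hq0).mpr hpq
  refine ⟨2, by norm_num, ?_⟩
  intro X _ _ Ω _ μ f g _ _ _ _
  have key : ∀ ω, ((‖(‖f ω‖ ^ (p / q - 1)) • f ω - (‖g ω‖ ^ (p / q - 1)) • g ω‖₊ : ℝ≥0∞)) ^ q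
      ≤ ENNReal.ofReal (2 ^ q) * (‖f ω - g ω‖₊ : ℝ≥0∞) ^ p := by
    intro ω
    have hpt := mazur_ptwise hα0 hα1 (f ω) (g ω)
    have hreal : ‖(‖f ω‖ ^ (p / q - 1)) • f ω - (‖g ω‖ ^ (p / q - 1)) • g ω‖ ^ q
        ≤ 2 ^ q * ‖f ω - g ω‖ ^ p := by
      calc ‖(‖f ω‖ ^ (p / q - 1)) • f ω - (‖g ω‖ ^ (p / q - 1)) • g ω‖ ^ q
          ≤ (2 * ‖f ω - g ω‖ ^ (p / q)) ^ q :=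
            Real.rpow_le_rpow (norm_nonneg _) hpt hq0.le
        _ = 2 ^ q * (‖f ω - g ω‖ ^ (p / q)) ^ q :=
            Real.mul_rpow (by norm_num) (Real.rpow_nonneg (norm_nonneg _) _)
        _ = 2 ^ q * ‖f ω - g ω‖ ^ p := by
            rw [← Real.rpow_mul (norm_nonneg _), div_mul_cancel₀ p hq0']
    calc ((‖(‖f ω‖ ^ (p / q - 1)) • f ω - (‖g ω‖ ^ (p / q - 1)) • g ω‖₊ : ℝ≥0∞)) ^ q
        = ENNReal.ofReal (‖(‖f ω‖ ^ (p / q - 1)) • f ω - (‖g ω‖ ^ (p / q - 1)) • g ω‖ ^ q) := by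
          rw [← enorm_eq_nnnorm, ← ofReal_norm, ← ENNReal.ofReal_rpow_of_nonneg (norm_nonneg _) hq0.le]
      _ ≤ ENNReal.ofReal (2 ^ q * ‖f ω - g ω‖ ^ p) := ENNReal.ofReal_le_ofReal hreal
      _ = ENNReal.ofReal (2 ^ q) * (‖f ω - g ω‖₊ : ℝ≥0∞) ^ p := by
          rw [ENNReal.ofReal_mul (Real.rpow_nonneg (by norm_num) _),
            ← enorm_eq_nnnorm, ← ofReal_norm,
            ← ENNReal.ofReal_rpow_of_nonneg (norm_nonneg _) (by linarith)]
  have hint : (∫⁻ ω, (‖(‖f ω‖ ^ (p / q - 1)) • f ω - (‖g ω‖ ^ (p / q - 1)) • g ω‖₊ : ℝ≥0∞) ^ q ∂μ)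
      ≤ ENNReal.ofReal (2 ^ q) * ∫⁻ ω, (‖f ω - g ω‖₊ : ℝ≥0∞) ^ p ∂μ := by
    rw [← lintegral_const_mul' _ _ ENNReal.ofReal_ne_top]
    exact lintegral_mono key
  calc (∫⁻ ω, (‖(‖f ω‖ ^ (p / q - 1)) • f ω - (‖g ω‖ ^ (p / q - 1)) • g ω‖₊ : ℝ≥0∞) ^ q ∂μ) ^ (1 / q)
      ≤ (ENNReal.ofReal (2 ^ q) * ∫⁻ ω, (‖f ω - g ω‖₊ : ℝ≥0∞) ^ p ∂μ) ^ (1 / q) :=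
        ENNReal.rpow_le_rpow hint (by positivity)
    _ = ENNReal.ofReal (2 ^ q) ^ (1 / q) * (∫⁻ ω, (‖f ω - g ω‖₊ : ℝ≥0∞) ^ p ∂μ) ^ (1 / q) :=
        ENNReal.mul_rpow_of_nonneg _ _ (by positivity)
    _ = ENNReal.ofReal 2 * (∫⁻ ω, (‖f ω - g ω‖₊ : ℝ≥0∞) ^ p ∂μ) ^ (1 / q) := by
        rw [← ENNReal.ofReal_rpow_of_pos (by norm_num), ← ENNReal.rpow_mul,
          mul_one_div_cancel hq0', ENNReal.rpow_one]
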